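/- Let p : D ⥤ B be a Grothendieck fibration, q : E ⥤ B a functor, and F : D ⥤ E a functor with F ⋙ q = p. Let X be an object of E over I = q.obj X, and suppose given an object GX of D with p.obj GX = I together with a vertical morphism ε : F.obj GX ⟶ X that is a terminal object of the comma category CostructuredArrow F X. Let f : X' ⟶ X be strongly cartesian with respect to q over σ := q.map f : J ⟶ I, and let σ̄ : GX' ⟶ GX be a strongly cartesian lift of σ in D with codomain GX. Then there is a unique vertical morphism ε' : F.obj GX' ⟶ X' satisfying ε' ≫ f = F.map σ̄ ≫ ε, and ε' is a terminal object of the comma category CostructuredArrow F X'. -/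

import Mathlib

open CategoryTheory Limits

lemma comp_isHomLift_of_comp {B D E : Type*} [Category B] [Category D] [Category E]
    (F : D ⥤ E) (q : E ⥤ B) {R S : B} {a b : D} (f : R ⟶ S) (φ : a ⟶ b)
    [(F ⋙ q).IsHomLift f φ] : q.IsHomLift f (F.map φ) := by
  obtain ⟨⟩ := (inferInstance : (F ⋙ q).IsHomLift f φ)
  exact inferInstanceAs (q.IsHomLift (q.map (F.map φ)) (F.map φ))

/-- Let `p : D ⥤ B` be a Grothendieck fibration, `q : E ⥤ B` a functor and `F : D ⥤ E` a
functor over `B`.  Suppose the partial right adjoint to `F` is defined at `X : E`, i.e. we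
have `GX : D` and a vertical morphism `ε : F.obj GX ⟶ X` which is terminal in the comma
category `CostructuredArrow F X`.  If `f : X' ⟶ X` is strongly cartesian over `σ = q.map f`
and `σ̄ : GX' ⟶ GX` is a strongly cartesian lift of `σ`, then there is a unique vertical
morphism `ε' : F.obj GX' ⟶ X'` with `ε' ≫ f = F.map σ̄ ≫ ε`, and this `ε'` is terminal in
`CostructuredArrow F X'`. -/
theorem partial_right_adjoint_defined_at_cartesian
    {B D E : Type*} [Category B] [Category D] [Category E]
    (p : D ⥤ B) [p.IsFibered] (q : E ⥤ B)
    (F : D ⥤ E) (hF : F ⋙ q = p)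
    {X : E} {GX : D} (ε : F.obj GX ⟶ X)
    (hε : q.IsHomLift (𝟙 (q.obj X)) ε)
    (hterm : IsTerminal (CostructuredArrow.mk ε))
    {X' : E} (f : X' ⟶ X) (hf : q.IsStronglyCartesian (q.map f) f)
    {GX' : D} (σbar : GX' ⟶ GX) (hσbar : p.IsStronglyCartesian (q.map f) σbar) :
    ∃ ε' : F.obj GX' ⟶ X',
      (q.IsHomLift (𝟙 (q.obj X')) ε' ∧ ε' ≫ f = F.map σbar ≫ ε) ∧
      (∀ ε'' : F.obj GX' ⟶ X',
        q.IsHomLift (𝟙 (q.obj X')) ε'' ∧ ε'' ≫ f = F.map σbar ≫ ε → ε'' = ε') ∧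
      Nonempty (IsTerminal (CostructuredArrow.mk ε')) := by
  subst hF
  haveI := hε
  haveI := hf
  haveI := hσbar
  haveI hFσ : q.IsHomLift (q.map f) (F.map σbar) :=
    comp_isHomLift_of_comp F q (q.map f) σbar
  haveI : q.IsHomLift (q.map f) (F.map σbar ≫ ε) :=
    CategoryTheory.IsHomLift.comp_lift_id_right' q (q.map f) (F.map σbar) (q.obj X) ε
  obtain ⟨ε', ⟨hε'lift, hε'fac⟩, hε'uniq⟩ :=
    Functor.IsStronglyCartesian.universal_property q (q.map f) f (𝟙 (q.obj X')) (q.map f)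
      (by simp) (F.map σbar ≫ ε)
  haveI := hε'lift
  have hqεb : q.obj (F.obj GX) = q.obj X :=
    CategoryTheory.IsHomLift.domain_eq q (𝟙 (q.obj X)) ε
  have hqε'b : q.obj (F.obj GX') = q.obj X' :=
    CategoryTheory.IsHomLift.domain_eq q (𝟙 (q.obj X')) ε'
  have hqε : q.map ε = eqToHom hqεb := by
    rw [CategoryTheory.IsHomLift.fac' q (𝟙 (q.obj X)) ε]; simp
  have hqε' : q.map ε' = eqToHom hqε'b := by
    rw [CategoryTheory.IsHomLift.fac' q (𝟙 (q.obj X')) ε']; simp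
  refine ⟨ε', ⟨hε'lift, hε'fac⟩, fun ε'' ⟨h1, h2⟩ => hε'uniq ε'' ⟨h1, h2⟩, ?_⟩
  have key : ∀ (A : D) (u : F.obj A ⟶ X'), ∃! t : A ⟶ GX', F.map t ≫ ε' = u := by
    intro A u
    have smor := hterm.from (CostructuredArrow.mk (u ≫ f))
    set s : A ⟶ GX := smor.left with hs
    have hsw : F.map s ≫ ε = u ≫ f := by simpa using smor.w
    have hlift : ∀ (t' : A ⟶ GX'), F.map t' ≫ ε' = u →
        (F ⋙ q).IsHomLift (q.map u) t' := by
      intro t' ht'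
      apply CategoryTheory.IsHomLift.of_commsq (F ⋙ q) (q.map u) t' rfl hqε'b
      have := congrArg q.map ht'
      rw [q.map_comp, hqε'] at this
      simpa using this
    haveI : (F ⋙ q).IsHomLift (q.map u ≫ q.map f) s := by
      apply CategoryTheory.IsHomLift.of_commsq (F ⋙ q) (q.map u ≫ q.map f) s rfl hqεb
      have := congrArg q.map hsw
      rw [q.map_comp, q.map_comp, hqε] at this
      simpa using this
    obtain ⟨t, ⟨htl, hts⟩, htu⟩ :=
      Functor.IsStronglyCartesian.universal_property (F ⋙ q) (q.map f) σbar (q.map u)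
        (q.map u ≫ q.map f) rfl s
    haveI := htl
    refine ⟨t, ?_, ?_⟩
    · haveI : q.IsHomLift (q.map u) (F.map t) := comp_isHomLift_of_comp F q (q.map u) t
      haveI : q.IsHomLift (q.map u) (F.map t ≫ ε') :=
        CategoryTheory.IsHomLift.comp_lift_id_right' q (q.map u) (F.map t) (q.obj X') ε'
      apply Functor.IsStronglyCartesian.ext q (q.map f) f (q.map u)
      rw [Category.assoc, hε'fac, ← Category.assoc, ← F.map_comp, hts, hsw]
    · intro t' ht'
      haveI := hlift t' ht'
      have hcomm : t' ≫ σbar = s := by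
        have h := hterm.hom_ext (CostructuredArrow.homMk (t' ≫ σbar)
            (by show F.map (t' ≫ σbar) ≫ ε = u ≫ f
                rw [F.map_comp, Category.assoc, ← hε'fac, ← Category.assoc, ht'])) smor
        simpa using congrArg CommaMorphism.left h
      exact htu t' ⟨inferInstance, hcomm⟩
  choose t ht using key
  refine ⟨IsTerminal.ofUniqueHom
    (fun G => CostructuredArrow.homMk (t G.left G.hom) (by simpa using (ht G.left G.hom).1))
    (fun G m => ?_)⟩
  apply CostructuredArrow.hom_ext
  exact (ht G.left G.hom).2 m.left (by simpa using m.w)
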